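/- Let b, θ ∈ (0,∞), c ∈ [0,∞), let f : [0,∞) → ℝ be continuous with f(t) ≥ b for all t ≥ 0, let h : [0,∞) → ℝ be continuous with |h(t)| ≤ c·e^{−θ t} for all t ≥ 0, and let w : [0,∞) → ℝ be differentiable with w′(t) = −f(t)·w(t) + h(t) for all t ≥ 0. Then |w(t)| ≤ (|w(0)| + c·K(b,θ))·e^{−min(θ, b/2)·t} for all t ≥ 0, where K(b,θ) := 1/|b−θ| if b ≠ θ and K(b,θ) := 2/(e·b) if b = θ. -/

import Mathlib

open MeasureTheory Filter Real

/-- The constant `K(b,θ)` from Step 3 of the proof of Proposition 4.1: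
`K(b,θ) = 1/|b−θ|` if `b ≠ θ` and `K(b,θ) = 2/(e·b)` if `b = θ`. -/
noncomputable def expKernelConst (b θ : ℝ) : ℝ :=
  if b = θ then 2 / (Real.exp 1 * b) else 1 / |b - θ|

lemma aux_x_exp_neg (x : ℝ) : x * Real.exp (-x) ≤ Real.exp (-1) := by
  have h1 : x ≤ Real.exp (x - 1) := by
    have := Real.add_one_le_exp (x - 1); linarith
  calc x * Real.exp (-x) ≤ Real.exp (x - 1) * Real.exp (-x) := by
        apply mul_le_mul_of_nonneg_right h1 (Real.exp_nonneg _)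
    _ = Real.exp (-1) := by rw [← Real.exp_add]; ring_nf

lemma integral_exp_mul' (c : ℝ) (hc : c ≠ 0) (t : ℝ) :
    ∫ s in (0:ℝ)..t, Real.exp (c * s) = (Real.exp (c * t) - 1) / c := by
  have hd : ∀ s ∈ Set.uIcc (0:ℝ) t,
      HasDerivAt (fun x => Real.exp (c * x) / c) (Real.exp (c * s)) s := by
    intro s _
    have h1 : HasDerivAt (fun x : ℝ => c * x) c s := by
      simpa using (hasDerivAt_id s).const_mul c
    have h2 := (Real.hasDerivAt_exp (c * s)).comp s h1
    have h3 := h2.div_const c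
    simpa [mul_div_assoc, mul_div_cancel_right₀, hc] using h3
  have hint : IntervalIntegrable (fun s => Real.exp (c * s)) volume 0 t :=
    (Real.continuous_exp.comp (continuous_const.mul continuous_id)).intervalIntegrable 0 t
  have := intervalIntegral.integral_eq_sub_of_hasDerivAt hd hint
  rw [this]; simp [sub_div]

lemma kernel_integral_bound (b θ : ℝ) (hb : 0 < b) (hθ : 0 < θ) (t : ℝ) (ht : 0 ≤ t) :
    ∫ s in (0:ℝ)..t, Real.exp (-b * (t - s) - θ * s)
      ≤ expKernelConst b θ * Real.exp (-(min θ (b / 2)) * t) := by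
  have hrw : ∀ s : ℝ, Real.exp (-b * (t - s) - θ * s)
      = Real.exp (-b * t) * Real.exp ((b - θ) * s) := by
    intro s; rw [← Real.exp_add]; ring_nf
  simp_rw [hrw]
  rw [intervalIntegral.integral_const_mul]
  by_cases hbθ : b = θ
  · subst hbθ
    have hmin : min b (b / 2) = b / 2 := min_eq_right (by linarith)
    have hI : (∫ s in (0:ℝ)..t, Real.exp ((b - b) * s)) = t := by simp
    rw [hI, hmin, expKernelConst, if_pos rfl]
    have he : Real.exp (-(b / 2) * t) = Real.exp (-(b / 2 * t)) := by ring_nf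
    have h0 : (b / 2 * t) * Real.exp (-(b / 2 * t)) ≤ Real.exp (-1) := aux_x_exp_neg _
    have key : t * Real.exp (-(b / 2 * t)) ≤ 2 / (Real.exp 1 * b) := by
      have h2 : t * Real.exp (-(b / 2 * t))
          = (2 / b) * ((b / 2 * t) * Real.exp (-(b / 2 * t))) := by
        field_simp
      rw [h2]
      calc (2 / b) * ((b / 2 * t) * Real.exp (-(b / 2 * t)))
          ≤ (2 / b) * Real.exp (-1) := mul_le_mul_of_nonneg_left h0 (by positivity)
        _ = 2 / (Real.exp 1 * b) := by
            rw [Real.exp_neg]; field_simp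
    calc Real.exp (-b * t) * t
        = (t * Real.exp (-(b / 2 * t))) * Real.exp (-(b / 2) * t) := by
          rw [he, mul_assoc, ← Real.exp_add]; ring_nf
      _ ≤ (2 / (Real.exp 1 * b)) * Real.exp (-(b / 2) * t) :=
          mul_le_mul_of_nonneg_right key (Real.exp_nonneg _)
  · rw [integral_exp_mul' (b - θ) (sub_ne_zero.mpr hbθ) t]
    rw [expKernelConst, if_neg hbθ]
    set μ := min θ (b / 2) with hμdef
    have hμb : μ * t ≤ b * t := by
      have h1 : μ ≤ b / 2 := min_le_right _ _
      nlinarith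
    have hμθ : μ * t ≤ θ * t := by
      have h1 : μ ≤ θ := min_le_left _ _
      nlinarith
    rcases lt_or_gt_of_ne hbθ with hlt | hgt
    · have hd : (0:ℝ) < θ - b := by linarith
      have habs : |b - θ| = θ - b := by rw [abs_of_neg (by linarith)]; ring
      have hnum : (Real.exp ((b - θ) * t) - 1) / (b - θ)
          = (1 - Real.exp ((b - θ) * t)) / (θ - b) := by
        rw [div_eq_div_iff (by linarith) (by linarith)]; ring
      calc Real.exp (-b * t) * ((Real.exp ((b - θ) * t) - 1) / (b - θ))
          = Real.exp (-b * t) * ((1 - Real.exp ((b - θ) * t)) / (θ - b)) := by rw [hnum]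
        _ ≤ Real.exp (-b * t) * (1 / (θ - b)) := by
            apply mul_le_mul_of_nonneg_left ?_ (Real.exp_nonneg _)
            apply div_le_div_of_nonneg_right ?_ hd.le
            have := Real.exp_nonneg ((b - θ) * t); linarith
        _ = Real.exp (-b * t) / (θ - b) := by ring
        _ ≤ Real.exp (-μ * t) / (θ - b) := by
            apply div_le_div_of_nonneg_right ?_ hd.le
            exact Real.exp_le_exp.mpr (by linarith)
        _ = 1 / |b - θ| * Real.exp (-μ * t) := by rw [habs]; ring
    · have hd : (0:ℝ) < b - θ := by linarith
      have habs : |b - θ| = b - θ := abs_of_pos (by linarith)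
      calc Real.exp (-b * t) * ((Real.exp ((b - θ) * t) - 1) / (b - θ))
          ≤ Real.exp (-b * t) * (Real.exp ((b - θ) * t) / (b - θ)) := by
            apply mul_le_mul_of_nonneg_left ?_ (Real.exp_nonneg _)
            apply div_le_div_of_nonneg_right ?_ hd.le
            linarith
        _ = Real.exp (-θ * t) / (b - θ) := by
            rw [← mul_div_assoc, ← Real.exp_add]; ring_nf
        _ ≤ Real.exp (-μ * t) / (b - θ) := by
            apply div_le_div_of_nonneg_right ?_ hd.le
            exact Real.exp_le_exp.mpr (by linarith)
        _ = 1 / |b - θ| * Real.exp (-μ * t) := by rw [habs]; ring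

theorem damped_ode_decay_estimate
    (b θ c : ℝ) (hb : 0 < b) (hθ : 0 < θ) (hc : 0 ≤ c)
    (f h w : ℝ → ℝ)
    (hf_cont : ContinuousOn f (Set.Ici 0))
    (hf_lb : ∀ t, 0 ≤ t → b ≤ f t)
    (hh_cont : ContinuousOn h (Set.Ici 0))
    (hh_bd : ∀ t, 0 ≤ t → |h t| ≤ c * Real.exp (-θ * t))
    (hw : ∀ t, 0 ≤ t → HasDerivAt w (-(f t) * w t + h t) t) :
    ∀ t, 0 ≤ t →
      |w t| ≤ (|w 0| + c * expKernelConst b θ) * Real.exp (-(min θ (b / 2)) * t) := by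
  intro t ht
  set μ := min θ (b / 2) with hμdef
  set F : ℝ → ℝ := fun x => ∫ s in (0:ℝ)..x, f s with hFdef
  -- interval integrability of f on [0, x]
  have hsub : ∀ x : ℝ, 0 ≤ x → Set.uIcc (0:ℝ) x ⊆ Set.Ici 0 := by
    intro x hx
    rw [Set.uIcc_of_le hx]
    exact Set.Icc_subset_Ici_self
  have hfint : ∀ x : ℝ, 0 ≤ x → IntervalIntegrable f volume 0 x := by
    intro x hx
    exact (hf_cont.mono (hsub x hx)).intervalIntegrable
  have hF0 : F 0 = 0 := intervalIntegral.integral_same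
  -- derivative of F at interior points
  have hFderiv : ∀ x : ℝ, 0 < x → HasDerivAt F (f x) x := by
    intro x hx
    apply intervalIntegral.integral_hasDerivAt_right (hfint x hx.le)
    · exact ⟨Set.Ici 0, Ici_mem_nhds hx, hf_cont.aestronglyMeasurable measurableSet_Ici⟩
    · exact (hf_cont x hx.le).continuousAt (Ici_mem_nhds hx)
  -- continuity of F on [0, t]
  have hFcont : ContinuousOn F (Set.Icc 0 t) := by
    have := intervalIntegral.continuousOn_primitive_interval'
      (hfint t ht) (Set.left_mem_uIcc (a := (0:ℝ)) (b := t))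
    rwa [Set.uIcc_of_le ht] at this
  -- key integral lower bound
  have hFkey : ∀ s x : ℝ, 0 ≤ s → s ≤ x → b * (x - s) ≤ F x - F s := by
    intro s x hs hsx
    have hx0 : 0 ≤ x := le_trans hs hsx
    have hsx_int : IntervalIntegrable f volume s x := by
      apply (hfint x hx0).mono_set
      rw [Set.uIcc_of_le hsx, Set.uIcc_of_le hx0]
      exact Set.Icc_subset_Icc hs le_rfl
    have hsplit : F x - F s = ∫ u in s..x, f u := by
      show (∫ u in (0:ℝ)..x, f u) - ∫ u in (0:ℝ)..s, f u = ∫ u in s..x, f u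
      exact intervalIntegral.integral_interval_sub_left (hfint x hx0) (hfint s hs)
    rw [hsplit]
    have hmono : ∫ u in s..x, (b : ℝ) ≤ ∫ u in s..x, f u := by
      apply intervalIntegral.integral_mono_on hsx
        intervalIntegrable_const hsx_int
      intro u hu
      exact hf_lb u (le_trans hs hu.1)
    calc b * (x - s) = ∫ u in s..x, (b : ℝ) := by
          rw [intervalIntegral.integral_const, smul_eq_mul]; ring
      _ ≤ ∫ u in s..x, f u := hmono
  -- continuity of w and h on [0, t]
  have hwcont : ContinuousOn w (Set.Icc 0 t) := by
    intro x hx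
    exact ((hw x hx.1).continuousAt).continuousWithinAt
  -- the function u = e^F * w
  have hucont : ContinuousOn (fun s => Real.exp (F s) * w s) (Set.Icc 0 t) :=
    (Real.continuous_exp.comp_continuousOn hFcont).mul hwcont
  have huderiv : ∀ x ∈ Set.Ioo (0:ℝ) t,
      HasDerivWithinAt (fun s => Real.exp (F s) * w s) (Real.exp (F x) * h x) (Set.Ioi x) x := by
    intro x hx
    have hF' := hFderiv x hx.1
    have hexp : HasDerivAt (fun s => Real.exp (F s)) (Real.exp (F x) * f x) x :=
      (Real.hasDerivAt_exp (F x)).comp x hF'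
    have hw' := hw x hx.1.le
    have := hexp.mul hw'
    have heq : Real.exp (F x) * f x * w x + Real.exp (F x) * (-f x * w x + h x)
        = Real.exp (F x) * h x := by ring
    rw [heq] at this
    exact this.hasDerivWithinAt
  have hgint : IntervalIntegrable (fun s => Real.exp (F s) * h s) volume 0 t := by
    apply ContinuousOn.intervalIntegrable
    rw [Set.uIcc_of_le ht]
    exact (Real.continuous_exp.comp_continuousOn hFcont).mul (hh_cont.mono
      (Set.Icc_subset_Ici_self))
  -- FTC
  have hFTC : (∫ s in (0:ℝ)..t, Real.exp (F s) * h s)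
      = Real.exp (F t) * w t - Real.exp (F 0) * w 0 :=
    intervalIntegral.integral_eq_sub_of_hasDeriv_right_of_le ht hucont huderiv hgint
  have hwt : Real.exp (F t) * w t = w 0 + ∫ s in (0:ℝ)..t, Real.exp (F s) * h s := by
    rw [hFTC, hF0, Real.exp_zero]; ring
  -- bound |w t|
  have hexpFt : (0:ℝ) < Real.exp (F t) := Real.exp_pos _
  have step1 : |w t| ≤ Real.exp (-F t) * |w 0|
      + Real.exp (-F t) * ∫ s in (0:ℝ)..t, Real.exp (F s) * |h s| := by
    have h1 : |Real.exp (F t) * w t| ≤ |w 0| + ∫ s in (0:ℝ)..t, Real.exp (F s) * |h s| := by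
      rw [hwt]
      calc |w 0 + ∫ s in (0:ℝ)..t, Real.exp (F s) * h s|
          ≤ |w 0| + |∫ s in (0:ℝ)..t, Real.exp (F s) * h s| := abs_add_le _ _
        _ ≤ |w 0| + ∫ s in (0:ℝ)..t, |Real.exp (F s) * h s| := by
            have := intervalIntegral.abs_integral_le_integral_abs
              (f := fun s => Real.exp (F s) * h s) (μ := volume) ht
            linarith
        _ = |w 0| + ∫ s in (0:ℝ)..t, Real.exp (F s) * |h s| := by
            congr 1
            apply intervalIntegral.integral_congr
            intro s _
            simp [abs_mul, Real.abs_exp]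
    have h2 : |w t| = Real.exp (-F t) * |Real.exp (F t) * w t| := by
      rw [abs_mul, Real.abs_exp, ← mul_assoc, Real.exp_neg,
        inv_mul_cancel₀ (ne_of_gt hexpFt), one_mul]
    rw [h2]
    calc Real.exp (-F t) * |Real.exp (F t) * w t|
        ≤ Real.exp (-F t) * (|w 0| + ∫ s in (0:ℝ)..t, Real.exp (F s) * |h s|) :=
          mul_le_mul_of_nonneg_left h1 (Real.exp_nonneg _)
      _ = Real.exp (-F t) * |w 0|
          + Real.exp (-F t) * ∫ s in (0:ℝ)..t, Real.exp (F s) * |h s| := by ring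
  -- bound the integral term
  have habsint : IntervalIntegrable (fun s => Real.exp (F s) * |h s|) volume 0 t := by
    apply ContinuousOn.intervalIntegrable
    rw [Set.uIcc_of_le ht]
    exact (Real.continuous_exp.comp_continuousOn hFcont).mul
      ((hh_cont.mono Set.Icc_subset_Ici_self).abs)
  have hkerint : IntervalIntegrable (fun s => c * Real.exp (-b * (t - s) - θ * s)) volume 0 t :=
    (Continuous.intervalIntegrable (by continuity) 0 t)
  have step2 : Real.exp (-F t) * (∫ s in (0:ℝ)..t, Real.exp (F s) * |h s|)
      ≤ c * ∫ s in (0:ℝ)..t, Real.exp (-b * (t - s) - θ * s) := by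
    rw [← intervalIntegral.integral_const_mul, ← intervalIntegral.integral_const_mul]
    apply intervalIntegral.integral_mono_on ht (habsint.const_mul _) (hkerint)
    intro s hs
    have hbd1 : Real.exp (-F t) * Real.exp (F s) ≤ Real.exp (-b * (t - s)) := by
      rw [← Real.exp_add]
      apply Real.exp_le_exp.mpr
      have := hFkey s t hs.1 hs.2
      linarith
    calc Real.exp (-F t) * (Real.exp (F s) * |h s|)
        = (Real.exp (-F t) * Real.exp (F s)) * |h s| := by ring
      _ ≤ Real.exp (-b * (t - s)) * (c * Real.exp (-θ * s)) := by
          apply mul_le_mul hbd1 (hh_bd s hs.1) (abs_nonneg _) (Real.exp_nonneg _)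
      _ = c * (Real.exp (-b * (t - s)) * Real.exp (-θ * s)) := by ring
      _ = c * Real.exp (-b * (t - s) - θ * s) := by rw [← Real.exp_add]; ring_nf
  have step3 : c * (∫ s in (0:ℝ)..t, Real.exp (-b * (t - s) - θ * s))
      ≤ c * (expKernelConst b θ * Real.exp (-μ * t)) :=
    mul_le_mul_of_nonneg_left (kernel_integral_bound b θ hb hθ t ht) hc
  -- bound the e^{-F t} |w 0| term
  have hFtb : b * t ≤ F t := by
    have := hFkey 0 t le_rfl ht
    rw [hF0] at this; linarith
  have step4 : Real.exp (-F t) * |w 0| ≤ |w 0| * Real.exp (-μ * t) := by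
    rw [mul_comm]
    apply mul_le_mul_of_nonneg_left ?_ (abs_nonneg _)
    apply Real.exp_le_exp.mpr
    have hμb : μ * t ≤ b * t := by
      have h1 : μ ≤ b / 2 := min_le_right _ _
      nlinarith
    linarith
  calc |w t| ≤ Real.exp (-F t) * |w 0|
        + Real.exp (-F t) * ∫ s in (0:ℝ)..t, Real.exp (F s) * |h s| := step1
    _ ≤ |w 0| * Real.exp (-μ * t) + c * (expKernelConst b θ * Real.exp (-μ * t)) := by
        have := le_trans step2 step3
        linarith
    _ = (|w 0| + c * expKernelConst b θ) * Real.exp (-μ * t) := by ring
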